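/- Let S be a Seidel matrix of odd order. Then S has an eigenvalue of multiplicity exactly 1. -/

import Mathlib

open Polynomial Matrix Finset

namespace SeidelAux

lemma charpoly_conj_eq {n : ℕ} {R : Type*} [CommRing R] (U D V : Matrix (Fin n) (Fin n) R)
    (h : U * V = 1) : (U * D * V).charpoly = D.charpoly := by
  have hUV : (C : R →+* R[X]).mapMatrix U * (C : R →+* R[X]).mapMatrix V = 1 := by
    rw [← _root_.map_mul, h, _root_.map_one]
  have hVU : (C : R →+* R[X]).mapMatrix V * (C : R →+* R[X]).mapMatrix U = 1 :=
    mul_eq_one_comm.mp hUV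
  have hmat : charmatrix (U * D * V)
      = (C : R →+* R[X]).mapMatrix U * charmatrix D * (C : R →+* R[X]).mapMatrix V := by
    simp only [charmatrix, Matrix.mul_sub, Matrix.sub_mul]
    congr 1
    · rw [show (Matrix.scalar (Fin n)) (X : R[X]) = (X : R[X]) • (1 : Matrix (Fin n) (Fin n) R[X])
        by rw [Matrix.smul_one_eq_diagonal]; rfl]
      rw [mul_smul_comm, smul_mul_assoc, mul_one, hUV]
    · rw [Matrix.mul_assoc, ← _root_.map_mul, ← _root_.map_mul, Matrix.mul_assoc]
  rw [Matrix.charpoly, Matrix.charpoly, hmat, det_mul, det_mul, mul_comm, ← mul_assoc,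
    ← det_mul, hVU, det_one, one_mul]

lemma charpoly_diagonal {n : ℕ} {R : Type*} [CommRing R] (d : Fin n → R) :
    (Matrix.diagonal d).charpoly = ∏ i, (X - C (d i)) := by
  rw [Matrix.charpoly]
  have : charmatrix (Matrix.diagonal d) = Matrix.diagonal fun i => X - C (d i) := by
    ext i j
    by_cases hij : i = j
    · subst hij; simp [charmatrix_apply_eq, Matrix.diagonal_apply_eq]
    · simp [charmatrix_apply_ne _ _ _ hij, Matrix.diagonal_apply_ne _ hij]
  rw [this, det_diagonal]


noncomputable abbrev phi2 : (ZMod 2)[X] →+* RatFunc (ZMod 2) :=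
  algebraMap (ZMod 2)[X] (RatFunc (ZMod 2))

set_option synthInstance.maxHeartbeats 1000000 in
lemma charpoly_A {n : ℕ} (hn : Odd n) :
    (Matrix.of fun i j : Fin n => if i = j then (0 : ZMod 2) else 1).charpoly
      = X * (X + 1) ^ (n - 1) := by
  have hinj : Function.Injective phi2 := IsFractionRing.injective _ _
  have h2 : (2 : RatFunc (ZMod 2)) = 0 := by
    have hP : ((2 : ℕ) : (ZMod 2)[X]) = 0 := by
      rw [← Polynomial.C_eq_natCast]
      have h22 : ((2 : ℕ) : ZMod 2) = 0 := by decide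
      rw [h22, map_zero]
    have h3 : ((2 : ℕ) : RatFunc (ZMod 2)) = phi2 ((2 : ℕ) : (ZMod 2)[X]) :=
      (map_natCast phi2 2).symm
    rw [hP, map_zero] at h3
    simpa using h3
  have hc0 : (X + 1 : (ZMod 2)[X]) ≠ 0 := fun h => by
    have h' := congrArg (Polynomial.eval 0) h
    simp only [eval_add, eval_X, eval_one, eval_zero, zero_add] at h'
    exact one_ne_zero h'
  set c : RatFunc (ZMod 2) := phi2 (X + 1) with hc
  have hcne : c ≠ 0 := fun h => hc0 (hinj (by rw [_root_.map_zero]; exact h))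
  have hXc : phi2 X = c + 1 := by
    rw [hc, _root_.map_add, _root_.map_one]
    linear_combination -h2
  have hn1 : 1 ≤ n := hn.pos
  set A := (Matrix.of fun i j : Fin n => if i = j then (0 : ZMod 2) else 1) with hA
  have hmat : (charmatrix A).map ⇑phi2
      = c • ((1 + Matrix.replicateCol Unit (fun _ => c⁻¹) * Matrix.replicateRow Unit (fun _ => (1 : RatFunc (ZMod 2)))) :
          Matrix (Fin n) (Fin n) (RatFunc (ZMod 2))) := by
    ext i j
    by_cases hij : i = j
    · subst hij
      simp only [Matrix.map_apply, charmatrix_apply_eq, Matrix.smul_apply, Matrix.add_apply,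
        Matrix.one_apply_eq, Matrix.mul_apply, Matrix.replicateCol_apply, Matrix.replicateRow_apply,
        Finset.univ_unique, Finset.sum_singleton, hA, Matrix.of_apply, if_pos rfl, ↓reduceIte, _root_.map_sub,
        _root_.map_zero, Polynomial.C_0, sub_zero, hXc, smul_eq_mul]
      field_simp
    · simp only [Matrix.map_apply, charmatrix_apply_ne _ _ _ hij, Matrix.smul_apply,
        Matrix.add_apply, Matrix.one_apply_ne hij, Matrix.mul_apply, Matrix.replicateCol_apply,
        Matrix.replicateRow_apply, Finset.univ_unique, Finset.sum_singleton, hA, Matrix.of_apply,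
        if_neg hij, _root_.map_neg, _root_.map_one, Polynomial.C_1, zero_add, smul_eq_mul, mul_one]
      rw [mul_inv_cancel₀ hcne]
      linear_combination -h2
  have hdet : phi2 A.charpoly = c ^ n + c ^ (n - 1) := by
    rw [Matrix.charpoly, RingHom.map_det, RingHom.mapMatrix_apply, hmat, Matrix.det_smul,
      Matrix.det_one_add_replicateCol_mul_replicateRow]
    have hdot : (fun _ : Fin n => (1 : RatFunc (ZMod 2))) ⬝ᵥ (fun _ => c⁻¹) = n * c⁻¹ := by
      simp [dotProduct, Finset.sum_const, nsmul_eq_mul]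
    rw [hdot]
    have hnK : ((n : ℕ) : RatFunc (ZMod 2)) = 1 := by
      obtain ⟨k, rfl⟩ := hn
      push_cast
      linear_combination (k : RatFunc (ZMod 2)) * h2
    rw [hnK, one_mul]
    have hpow : c ^ n = c ^ (n - 1) * c := by
      rw [← pow_succ, Nat.sub_add_cancel hn1]
    rw [mul_add, mul_one, hpow]
    field_simp
    rw [Fintype.card_fin, hpow]
    ring
  apply hinj
  rw [hdet, _root_.map_mul, _root_.map_pow, hXc, ← hc]
  have hpow : c ^ n = c ^ (n - 1) * c := by
    rw [← pow_succ, Nat.sub_add_cancel hn1]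
  rw [hpow]; ring


lemma rootMultiplicity_pow' {R : Type*} [CommRing R] [IsDomain R] {p : R[X]} (hp : p ≠ 0)
    (x : R) (k : ℕ) : (p ^ k).rootMultiplicity x = k * p.rootMultiplicity x := by
  induction k with
  | zero => simp
  | succ k ih =>
    rw [pow_succ, Polynomial.rootMultiplicity_mul (mul_ne_zero (pow_ne_zero _ hp) hp), ih]
    ring

lemma aeval_eq_eval_map {R : Type*} [CommRing R] (q : ℤ[X]) (x : R) :
    (Polynomial.aeval x) q = (q.map (Int.castRingHom R)).eval x := by
  rw [Polynomial.aeval_def, Polynomial.eval₂_eq_eval_map, algebraMap_int_eq]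

lemma key_lemma : ∀ N : ℕ, ∀ q : ℤ[X], q.natDegree ≤ N → q.Monic →
    (q.map (Int.castRingHom ℝ)).Splits →
    (∀ μ : ℝ, (q.map (Int.castRingHom ℝ)).IsRoot μ →
      2 ≤ (q.map (Int.castRingHom ℝ)).rootMultiplicity μ) →
    (q.map (Int.castRingHom (ZMod 2))).rootMultiplicity 0 ≠ 1 := by
  intro N
  induction N with
  | zero =>
    intro q hdeg hmon _ _
    have hq1 : q = 1 := hmon.natDegree_eq_zero.mp (Nat.le_zero.mp hdeg)
    subst hq1
    rw [Polynomial.map_one, Polynomial.rootMultiplicity_eq_zero (by simp [Polynomial.IsRoot])]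
    omega
  | succ N IH =>
    intro q hdeg hmon hsplit hmult
    by_cases h0 : q.natDegree = 0
    · have hq1 : q = 1 := hmon.natDegree_eq_zero.mp h0
      subst hq1
      rw [Polynomial.map_one, Polynomial.rootMultiplicity_eq_zero (by simp [Polynomial.IsRoot])]
      omega
    -- setup
    have hqRmon : (q.map (Int.castRingHom ℝ)).Monic := hmon.map _
    have hqRne : q.map (Int.castRingHom ℝ) ≠ 0 := hqRmon.ne_zero
    have hdegR : (q.map (Int.castRingHom ℝ)).degree ≠ 0 := by
      rw [hmon.degree_map]
      rw [Polynomial.degree_eq_natDegree hmon.ne_zero]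
      exact_mod_cast fun h => h0 (by exact_mod_cast h)
    obtain ⟨l0, hroot⟩ := hsplit.exists_eval_eq_zero hdegR
    have hint : IsIntegral ℤ l0 := ⟨q, hmon, by
      rw [algebraMap_int_eq, Polynomial.eval₂_eq_eval_map]; exact hroot⟩
    set f : ℤ[X] := minpoly ℤ l0 with hfdef
    have hfmon : f.Monic := minpoly.monic hint
    have hfdeg : 0 < f.natDegree := minpoly.natDegree_pos hint
    have hfprime : Prime f := minpoly.prime_of_isIntegrallyClosed hint
    -- separability bound
    have hsep : ∀ μ : ℝ, (f.map (Int.castRingHom ℝ)).rootMultiplicity μ ≤ 1 := by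
      have hQint : IsIntegral ℚ l0 := hint.tower_top
      have heq : minpoly ℚ l0 = f.map (algebraMap ℤ ℚ) :=
        minpoly.isIntegrallyClosed_eq_field_fractions' ℚ hint
      have hsepQ : (minpoly ℚ l0).Separable := (minpoly.irreducible hQint).separable
      have hsepR : ((minpoly ℚ l0).map (algebraMap ℚ ℝ)).Separable := hsepQ.map
      have hmapeq : (minpoly ℚ l0).map (algebraMap ℚ ℝ) = f.map (Int.castRingHom ℝ) := by
        rw [heq, Polynomial.map_map]
        congr 1
      rw [← hmapeq]
      intro μ
      exact Polynomial.rootMultiplicity_le_one_of_separable hsepR μ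
    have hfR0 : (f.map (Int.castRingHom ℝ)).IsRoot l0 := by
      have h := minpoly.aeval ℤ l0
      rw [aeval_eq_eval_map] at h
      exact h
    have hfRne : f.map (Int.castRingHom ℝ) ≠ 0 := (hfmon.map _).ne_zero
    have hfrm1 : (f.map (Int.castRingHom ℝ)).rootMultiplicity l0 = 1 :=
      le_antisymm (hsep l0) ((Polynomial.rootMultiplicity_pos hfRne).mpr hfR0)
    -- minpoly of any root of f is f
    have hfmin : ∀ μ : ℝ, (f.map (Int.castRingHom ℝ)).IsRoot μ → minpoly ℤ μ = f := by
      intro μ hμ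
      have hintμ : IsIntegral ℤ μ := ⟨f, hfmon, by
        rw [algebraMap_int_eq, Polynomial.eval₂_eq_eval_map]; exact hμ⟩
      have hdvd : minpoly ℤ μ ∣ f :=
        minpoly.isIntegrallyClosed_dvd hintμ (by rw [aeval_eq_eval_map]; exact hμ)
      obtain ⟨e, he⟩ := hdvd
      rcases hfprime.irreducible.isUnit_or_isUnit he with hu | hu
      · exact absurd hu (by
          intro hu
          have := Polynomial.natDegree_eq_zero_of_isUnit hu
          have := minpoly.natDegree_pos hintμ
          omega)
      · have : Associated (minpoly ℤ μ) f := ⟨hu.unit, by rw [he]; simp⟩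
        exact Polynomial.eq_of_monic_of_associated (minpoly.monic hintμ) hfmon this
    set m := (q.map (Int.castRingHom ℝ)).rootMultiplicity l0 with hmdef
    have hm2 : 2 ≤ m := hmult l0 hroot
    -- f ^ m ∣ q
    have hfm : ∀ j, j ≤ m → f ^ j ∣ q := by
      intro j
      induction j with
      | zero => intro _; exact one_dvd q
      | succ j ihj =>
        intro hj
        obtain ⟨c, hc⟩ := ihj (by omega)
        have hcne : c ≠ 0 := by
          intro h; rw [h, mul_zero] at hc; exact hmon.ne_zero hc
        have hrmc : (c.map (Int.castRingHom ℝ)).rootMultiplicity l0 = m - j * 1 := by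
          have : q.map (Int.castRingHom ℝ)
              = (f.map (Int.castRingHom ℝ)) ^ j * c.map (Int.castRingHom ℝ) := by
            rw [← Polynomial.map_pow, ← Polynomial.map_mul, ← hc]
          rw [hmdef, this, Polynomial.rootMultiplicity_mul, rootMultiplicity_pow' hfRne, hfrm1]
          · omega
          · rw [← this]; exact hqRne
        have hcroot : (c.map (Int.castRingHom ℝ)).IsRoot l0 := by
          rw [← Polynomial.rootMultiplicity_pos (by
            intro h; rw [h] at hrmc; simp [Polynomial.rootMultiplicity_zero] at hrmc; omega)]
          omega
        have : f ∣ c := minpoly.isIntegrallyClosed_dvd hint (by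
          rw [aeval_eq_eval_map]; exact hcroot)
        obtain ⟨d, hd⟩ := this
        exact ⟨d, by rw [hc, hd, pow_succ]; ring⟩
    obtain ⟨q', hq'⟩ := hfm m le_rfl
    have hq'mon : q'.Monic := (hfmon.pow m).of_mul_monic_left (hq' ▸ hmon)
    have hq'Rne : q'.map (Int.castRingHom ℝ) ≠ 0 := (hq'mon.map _).ne_zero
    have hqR_split : q.map (Int.castRingHom ℝ)
        = (f.map (Int.castRingHom ℝ)) ^ m * q'.map (Int.castRingHom ℝ) := by
      rw [← Polynomial.map_pow, ← Polynomial.map_mul, ← hq']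
    -- f does not divide q'
    have hfnd : ¬ f ∣ q' := by
      rintro ⟨d, hd⟩
      have hdne : d ≠ 0 := by
        intro h; rw [h, mul_zero] at hd; exact hq'mon.ne_zero hd
      have hqz : q = f ^ (m + 1) * d := by
        rw [hq', hd, pow_succ]; ring
      have hq2 : q.map (Int.castRingHom ℝ)
          = (f.map (Int.castRingHom ℝ)) ^ (m + 1) * d.map (Int.castRingHom ℝ) := by
        rw [hqz, Polynomial.map_mul, Polynomial.map_pow]
      have hX : m = (m + 1) * 1 + (d.map (Int.castRingHom ℝ)).rootMultiplicity l0 := by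
        conv_lhs => rw [hmdef, hq2]
        rw [Polynomial.rootMultiplicity_mul (by rw [← hq2]; exact hqRne),
          rootMultiplicity_pow' hfRne, hfrm1]
      omega
    -- roots of f are not roots of q'
    have hfq' : ∀ μ : ℝ, (f.map (Int.castRingHom ℝ)).IsRoot μ →
        ¬ (q'.map (Int.castRingHom ℝ)).IsRoot μ := by
      intro μ hμf hμq'
      have hintμ : IsIntegral ℤ μ := ⟨f, hfmon, by
        rw [algebraMap_int_eq, Polynomial.eval₂_eq_eval_map]; exact hμf⟩
      have : f ∣ q' := by
        rw [← hfmin μ hμf]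
        exact minpoly.isIntegrallyClosed_dvd hintμ (by rw [aeval_eq_eval_map]; exact hμq')
      exact hfnd this
    -- multiplicity invariant for q'
    have hmult' : ∀ μ : ℝ, (q'.map (Int.castRingHom ℝ)).IsRoot μ →
        2 ≤ (q'.map (Int.castRingHom ℝ)).rootMultiplicity μ := by
      intro μ hμ
      by_cases hμf : (f.map (Int.castRingHom ℝ)).IsRoot μ
      · exact absurd hμ (hfq' μ hμf)
      · have h1 : (q.map (Int.castRingHom ℝ)).IsRoot μ := by
          rw [hqR_split, Polynomial.IsRoot, Polynomial.eval_mul, Polynomial.eval_pow]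
          rw [Polynomial.IsRoot] at hμ
          rw [hμ, mul_zero]
        have h2 := hmult μ h1
        rw [hqR_split, Polynomial.rootMultiplicity_mul (by rw [← hqR_split]; exact hqRne),
          rootMultiplicity_pow' hfRne, Polynomial.rootMultiplicity_eq_zero hμf] at h2
        omega
    -- splits for q'
    have hsplit' : (q'.map (Int.castRingHom ℝ)).Splits :=
      Polynomial.Splits.of_dvd hsplit hqRne ⟨(f.map (Int.castRingHom ℝ)) ^ m,
        by rw [hqR_split]; ring⟩
    -- degree bound
    have hdeg' : q'.natDegree ≤ N := by
      have h1 : q.natDegree = m * f.natDegree + q'.natDegree := by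
        rw [hq', Polynomial.natDegree_mul (pow_ne_zero _ hfmon.ne_zero) hq'mon.ne_zero,
          Polynomial.natDegree_pow]
      have h2 : 2 * 1 ≤ m * f.natDegree := Nat.mul_le_mul hm2 hfdeg
      omega
    have hIH := IH q' hdeg' hq'mon hsplit' hmult'
    -- final computation mod 2
    have hq2_split : q.map (Int.castRingHom (ZMod 2))
        = (f.map (Int.castRingHom (ZMod 2))) ^ m * q'.map (Int.castRingHom (ZMod 2)) := by
      rw [← Polynomial.map_pow, ← Polynomial.map_mul, ← hq']
    have hf2ne : f.map (Int.castRingHom (ZMod 2)) ≠ 0 := (hfmon.map _).ne_zero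
    have hq2ne : q.map (Int.castRingHom (ZMod 2)) ≠ 0 := (hmon.map _).ne_zero
    rw [hq2_split, Polynomial.rootMultiplicity_mul (by rw [← hq2_split]; exact hq2ne),
      rootMultiplicity_pow' hf2ne]
    intro hcontra
    rcases Nat.eq_zero_or_pos ((f.map (Int.castRingHom (ZMod 2))).rootMultiplicity 0) with h | h
    · rw [h, mul_zero, zero_add] at hcontra
      exact hIH hcontra
    · have h2 : 2 * 1 ≤ m * (f.map (Int.castRingHom (ZMod 2))).rootMultiplicity 0 :=
        Nat.mul_le_mul hm2 h
      omega

lemma hermitian_charpoly {n : ℕ} (S : Matrix (Fin n) (Fin n) ℝ) (hH : S.IsHermitian) :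
    S.charpoly = ∏ i, (X - C (hH.eigenvalues i)) := by
  have hU : (hH.eigenvectorUnitary : Matrix (Fin n) (Fin n) ℝ)
      * star (hH.eigenvectorUnitary : Matrix (Fin n) (Fin n) ℝ) = 1 :=
    (Matrix.mem_unitaryGroup_iff).mp hH.eigenvectorUnitary.2
  conv_lhs => rw [hH.spectral_theorem, Unitary.conjStarAlgAut_apply]
  rw [charpoly_conj_eq _ _ _ hU]
  have : (RCLike.ofReal ∘ hH.eigenvalues : Fin n → ℝ) = hH.eigenvalues := by
    ext i; simp
  rw [this, charpoly_diagonal]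

end SeidelAux

open SeidelAux

def IsSeidel {n : ℕ} (S : Matrix (Fin n) (Fin n) ℝ) : Prop :=
  S.IsSymm ∧ (∀ i, S i i = 0) ∧ ∀ i j, i ≠ j → S i j = 1 ∨ S i j = -1

theorem seidel_odd_order_simple_eigenvalue {n : ℕ} (hn : Odd n)
    (S : Matrix (Fin n) (Fin n) ℝ) (hS : IsSeidel S) (hH : S.IsHermitian) :
    ∃ μ : ℝ, (Finset.univ.filter fun i => hH.eigenvalues i = μ).card = 1 := by
  by_contra hcon
  push_neg at hcon
  set T : Matrix (Fin n) (Fin n) ℤ :=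
    Matrix.of (fun i j => if i = j then 0 else if S i j = 1 then 1 else -1) with hT
  have hTR : T.map ⇑(Int.castRingHom ℝ) = S := by
    ext i j
    by_cases hij : i = j
    · subst hij
      simp [hT, hS.2.1 i]
    · rcases hS.2.2 i j hij with h | h <;> simp [hT, hij, h] <;> norm_num
  have hT2 : T.map ⇑(Int.castRingHom (ZMod 2))
      = Matrix.of fun i j : Fin n => if i = j then (0 : ZMod 2) else 1 := by
    ext i j
    by_cases hij : i = j
    · simp [hT, hij]
    · by_cases h1 : S i j = 1 <;> simp [hT, hij, h1] <;> decide
  have hchR : T.charpoly.map (Int.castRingHom ℝ) = S.charpoly := by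
    rw [← Matrix.charpoly_map, hTR]
  have hch2 : T.charpoly.map (Int.castRingHom (ZMod 2)) = X * (X + 1) ^ (n - 1) := by
    rw [← Matrix.charpoly_map, hT2, charpoly_A hn]
  have hprod : S.charpoly = ∏ i, (X - C (hH.eigenvalues i)) := hermitian_charpoly S hH
  have hroots : S.charpoly.roots = Finset.univ.val.map hH.eigenvalues := by
    rw [hprod, Finset.prod_eq_multiset_prod]
    rw [show Multiset.map (fun i => X - C (hH.eigenvalues i)) Finset.univ.val
        = Multiset.map (fun a => X - C a) (Multiset.map hH.eigenvalues Finset.univ.val) by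
      rw [Multiset.map_map]; rfl]
    exact Polynomial.roots_multiset_prod_X_sub_C _
  have hcard : ∀ μ : ℝ, S.charpoly.rootMultiplicity μ
      = (Finset.univ.filter fun i => hH.eigenvalues i = μ).card := by
    intro μ
    rw [← Polynomial.count_roots, hroots, Multiset.count_map]
    have h1 : Multiset.filter (fun a => μ = hH.eigenvalues a) Finset.univ.val
        = Multiset.filter (fun a => hH.eigenvalues a = μ) Finset.univ.val :=
      Multiset.filter_congr fun x _ => eq_comm
    rw [h1]
    rfl
  -- charpoly of S is monic and nonzero
  have hSmon : S.charpoly.Monic := S.charpoly_monic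
  have hsplit : (T.charpoly.map (Int.castRingHom ℝ)).Splits := by
    rw [hchR, hprod]
    exact Polynomial.Splits.prod fun i _ => Polynomial.Splits.X_sub_C _
  have hmult : ∀ μ : ℝ, (T.charpoly.map (Int.castRingHom ℝ)).IsRoot μ →
      2 ≤ (T.charpoly.map (Int.castRingHom ℝ)).rootMultiplicity μ := by
    intro μ hμ
    rw [hchR] at hμ ⊢
    have h1 : 0 < S.charpoly.rootMultiplicity μ :=
      (Polynomial.rootMultiplicity_pos hSmon.ne_zero).mpr hμ
    have h2 := hcon μ
    rw [hcard μ] at h1 ⊢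
    omega
  have := key_lemma T.charpoly.natDegree T.charpoly le_rfl T.charpoly_monic hsplit hmult
  apply this
  rw [hch2]
  have hXne : (X : (ZMod 2)[X]) ≠ 0 := Polynomial.X_ne_zero
  have hX1ne : ((X + 1 : (ZMod 2)[X])) ^ (n - 1) ≠ 0 := by
    apply pow_ne_zero
    intro h
    have := congrArg (Polynomial.eval 0) h
    simp at this
  rw [Polynomial.rootMultiplicity_mul (mul_ne_zero hXne hX1ne)]
  have hrmX : (X : (ZMod 2)[X]).rootMultiplicity 0 = 1 := by
    rw [show (X : (ZMod 2)[X]) = X - C 0 by simp]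
    exact Polynomial.rootMultiplicity_X_sub_C_self
  have hrm1 : ((X + 1 : (ZMod 2)[X]) ^ (n - 1)).rootMultiplicity 0 = 0 := by
    apply Polynomial.rootMultiplicity_eq_zero
    intro h
    rw [Polynomial.IsRoot] at h
    simp at h
  rw [hrmX, hrm1]
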